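/- Let w ∈ W_p be such that wsw⁻¹ ∉ W_{I,p}. Then the orbit of w·μ + pX under the dot action of W_I on X/pX has exactly |W_I| elements; that is, N_I(w·μ) = |W_I|. -/
import Mathlib


noncomputable section

/-- The real vector space `X ⊗ ℝ`, where `X` is a free abelian group of rank `r`. -/
abbrev Vr (r : ℕ) := Fin r → ℝ

/-- The lattice `X` (identified with `ℤ^r`); its dual lattice `Y` is identified with
the same coordinate lattice via the standard perfect pairing. -/
abbrev Lr (r : ℕ) := Fin r → ℤ

/-- The embedding `X → X ⊗ ℝ`. -/
def toV {r : ℕ} (x : Lr r) : Vr r := fun i => (x i : ℝ)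

/-- The perfect pairing `⟨·,·⟩ : X × Y → ℤ`. -/
def pairZ {r : ℕ} (x y : Lr r) : ℤ := ∑ i, x i * y i

/-- The real extension of the pairing to `(X ⊗ ℝ) × Y → ℝ`. -/
def pairR {r : ℕ} (v : Vr r) (y : Lr r) : ℝ := ∑ i, v i * (y i : ℝ)

/-- The subgroup `ℤI` of `X` generated by a subset `I ⊆ X`. -/
def ZI {r : ℕ} (I : Finset (Lr r)) : AddSubgroup (Lr r) :=
  AddSubgroup.closure (I : Set (Lr r))

/-- The data of a reduced crystallographic root system `Φ ⊆ X` with a fixed positive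
system `Φ⁺`, simple roots `Φ_s`, coroots `α∨ ∈ Y`, a prime `p`, and the half-sum
`ρ ∈ X` of the positive roots. -/
structure ARDatum (r : ℕ) where
  Φ : Finset (Lr r)
  pos : Finset (Lr r)
  simples : Finset (Lr r)
  coroot : Lr r → Lr r
  p : ℕ
  ρ : Lr r
  hp : p.Prime
  root_ne_zero : ∀ α ∈ Φ, α ≠ 0
  pos_sub : pos ⊆ Φ
  simples_sub : simples ⊆ pos
  pos_or_neg : ∀ α ∈ Φ, α ∈ pos ∨ -α ∈ pos
  not_pos_and_neg : ∀ α ∈ pos, -α ∉ pos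
  neg_mem : ∀ α ∈ Φ, -α ∈ Φ
  root_coroot_two : ∀ α ∈ Φ, pairZ α (coroot α) = 2
  reflect_root_mem : ∀ α ∈ Φ, ∀ β ∈ Φ, β - pairZ β (coroot α) • α ∈ Φ
  reflect_coroot_mem : ∀ α ∈ Φ, ∀ β ∈ Φ,
    coroot β - pairZ α (coroot β) • coroot α ∈ coroot '' (Φ : Set (Lr r))
  reduced : ∀ α ∈ Φ, ∀ c : ℤ, c • α ∈ Φ → c = 1 ∨ c = -1
  pos_sum_simples : ∀ β ∈ pos, ∃ c : Lr r → ℕ, β = ∑ α ∈ simples, (c α : ℤ) • α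
  two_rho : (2 : ℤ) • ρ = ∑ α ∈ pos, α

namespace ARDatum

/-- The group of affine transformations of `X ⊗ ℝ`. -/
abbrev G (r : ℕ) := (Vr r) ≃ᵃ[ℝ] (Vr r)

variable {r : ℕ} (D : ARDatum r)

/-- `g` is the affine reflection `s_{α,mp} : v ↦ v − (⟨v,α∨⟩ − mp)·α`. -/
def IsRefl (α : Lr r) (m : ℤ) (g : G r) : Prop :=
  ∀ v : Vr r, g v = v - (pairR v (D.coroot α) - (m : ℝ) * (D.p : ℝ)) • toV α

/-- `g` is the linear reflection `s_α : v ↦ v − ⟨v,α∨⟩·α`. -/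
def IsLinRefl (α : Lr r) (g : G r) : Prop := D.IsRefl α 0 g

/-- `g` is the translation `t_{α,mp} : v ↦ v + mp·α`. -/
def IsTransl (α : Lr r) (m : ℤ) (g : G r) : Prop :=
  ∀ v : Vr r, g v = v + ((m : ℝ) * (D.p : ℝ)) • toV α

/-- The affine Weyl group `W_p`, generated by the `s_α` and the `t_{α,mp}`
for `α ∈ Φ⁺`, `m ∈ ℤ`. -/
def Wp : Subgroup (G r) :=
  Subgroup.closure ({g | ∃ α ∈ D.pos, D.IsLinRefl α g} ∪
    {g | ∃ α ∈ D.pos, ∃ m : ℤ, D.IsTransl α m g})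

/-- The finite Weyl group `W`, generated by the `s_α` for `α ∈ Φ⁺`. -/
def W : Subgroup (G r) :=
  Subgroup.closure {g | ∃ α ∈ D.pos, D.IsLinRefl α g}

/-- The subgroup `W_{I,p}` generated by the `s_α` and `t_{α,mp}` for `α ∈ I`. -/
def WIp (I : Finset (Lr r)) : Subgroup (G r) :=
  Subgroup.closure ({g | ∃ α ∈ I, D.IsLinRefl α g} ∪
    {g | ∃ α ∈ I, ∃ m : ℤ, D.IsTransl α m g})

/-- The subgroup `W_I` of `W` generated by the `s_α` for `α ∈ I`. -/
def WI (I : Finset (Lr r)) : Subgroup (G r) :=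
  Subgroup.closure {g | ∃ α ∈ I, D.IsLinRefl α g}

/-- `g` is a reflection (the reflections of `W_p` are exactly the `s_{α,mp}`). -/
def IsReflection (g : G r) : Prop := ∃ α ∈ D.pos, ∃ m : ℤ, D.IsRefl α m g

/-- The dot action `w·v := w(v+ρ) − ρ`. -/
def dot (g : G r) (v : Vr r) : Vr r := g (v + toV D.ρ) - toV D.ρ

/-- The hyperplane `H_{α,n} = {v : ⟨v+ρ,α∨⟩ = np}`. -/
def Hyp (α : Lr r) (n : ℤ) : Set (Vr r) :=
  {v | pairR (v + toV D.ρ) (D.coroot α) = (n : ℝ) * (D.p : ℝ)}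

/-- The complement of the union of all the hyperplanes `H_{α,n}`. -/
def Reg : Set (Vr r) :=
  {v | ∀ α ∈ D.pos, ∀ n : ℤ, pairR (v + toV D.ρ) (D.coroot α) ≠ (n : ℝ) * (D.p : ℝ)}

/-- The alcove containing `v` (the connected component of `v` in the complement of
the hyperplanes). -/
def alcoveOf (v : Vr r) : Set (Vr r) := connectedComponentIn D.Reg v

/-- `H_{α,n}` contains a wall of `A`, i.e. the interior of `closure A ∩ H_{α,n}`
inside the hyperplane `H_{α,n}` is nonempty. -/
def HasWall (A : Set (Vr r)) (α : Lr r) (n : ℤ) : Prop :=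
  ∃ x ∈ closure A ∩ D.Hyp α n, ∃ ε > 0,
    ∀ y ∈ D.Hyp α n, dist y x < ε → y ∈ closure A

/-- The fundamental alcove `C`. -/
def FundC : Set (Vr r) :=
  {v | ∀ α ∈ D.pos, 0 < pairR (v + toV D.ρ) (D.coroot α) ∧
    pairR (v + toV D.ρ) (D.coroot α) < (D.p : ℝ)}

/-- The closure `C̄` of the fundamental alcove. -/
def FundCBar : Set (Vr r) :=
  {v | ∀ α ∈ D.pos, 0 ≤ pairR (v + toV D.ρ) (D.coroot α) ∧
    pairR (v + toV D.ρ) (D.coroot α) ≤ (D.p : ℝ)}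

/-- The region `C_I`. -/
def CI (I : Finset (Lr r)) : Set (Vr r) :=
  {v | ∀ α ∈ D.pos, α ∈ ZI I → 0 < pairR (v + toV D.ρ) (D.coroot α) ∧
    pairR (v + toV D.ρ) (D.coroot α) < (D.p : ℝ)}

/-- The region `C̄_I`. -/
def CIBar (I : Finset (Lr r)) : Set (Vr r) :=
  {v | ∀ α ∈ D.pos, α ∈ ZI I → 0 ≤ pairR (v + toV D.ρ) (D.coroot α) ∧
    pairR (v + toV D.ρ) (D.coroot α) ≤ (D.p : ℝ)}

/-- `S_p`: the reflections of `W_p` in the walls of the fundamental alcove `C`. -/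
def Sp : Set (G r) :=
  {g | g ∈ D.Wp ∧ ∃ α ∈ D.pos, ∃ m : ℤ, D.IsRefl α m g ∧ D.HasWall D.FundC α m}

/-- One step of the order `⪯` (`↑`): `s_{α,mp}·u ⪯ u` whenever `⟨u+ρ,α∨⟩ ≥ mp`. -/
def UpStep (v u : Vr r) : Prop :=
  ∃ α ∈ D.pos, ∃ m : ℤ, (m : ℝ) * (D.p : ℝ) ≤ pairR (u + toV D.ρ) (D.coroot α) ∧
    v = u - (pairR (u + toV D.ρ) (D.coroot α) - (m : ℝ) * (D.p : ℝ)) • toV α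

/-- The order `⪯` (`↑`): the reflexive-transitive closure of `UpStep`. -/
def Up : Vr r → Vr r → Prop := Relation.ReflTransGen D.UpStep

/-- The strict order `≺`. -/
def Ups (v u : Vr r) : Prop := D.Up v u ∧ v ≠ u

/-- The order `≤`: `v ≤ u` iff `u − v` is a `ℤ≥0`-combination of the simple roots. -/
def Le (v u : Vr r) : Prop :=
  ∃ c : Lr r → ℕ, u - v = ∑ α ∈ D.simples, (c α : ℝ) • toV α

/-- The strict order `<`. -/
def Lt (v u : Vr r) : Prop := D.Le v u ∧ v ≠ u

/-- `X₊ = {ν ∈ X : ⟨ν+ρ,α∨⟩ ≥ 0 for all α ∈ Φ⁺}`, viewed inside `X ⊗ ℝ`. -/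
def XplusR : Set (Vr r) :=
  {v | (∃ ν : Lr r, toV ν = v) ∧ ∀ α ∈ D.pos, 0 ≤ pairR (v + toV D.ρ) (D.coroot α)}

/-- `n_α(v)`: the unique integer with `n_α(v)·p < ⟨v+ρ,α∨⟩ < (n_α(v)+1)·p`
(for `v` on none of the hyperplanes), realised as a floor. -/
def nfl (v : Vr r) (α : Lr r) : ℤ := ⌊pairR (v + toV D.ρ) (D.coroot α) / (D.p : ℝ)⌋

/-- `d(v) = ∑_{α ∈ Φ⁺} n_α(v)`. -/
def dfn (v : Vr r) : ℤ := ∑ α ∈ D.pos, D.nfl v α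

/-- The sublattice `pX` of `X`. -/
def pLat : AddSubgroup (Lr r) where
  carrier := {x | ∃ y : Lr r, x = (D.p : ℤ) • y}
  zero_mem' := ⟨0, by simp⟩
  add_mem' := by rintro a b ⟨y, rfl⟩ ⟨z, rfl⟩; exact ⟨y + z, (smul_add _ _ _).symm⟩
  neg_mem' := by rintro a ⟨y, rfl⟩; exact ⟨-y, (smul_neg _ _).symm⟩

/-- The orbit of `ν + pX` under the dot action of `W_I` on `X/pX`. -/
def dotOrbit (I : Finset (Lr r)) (ν : Lr r) : Set (Lr r ⧸ D.pLat) :=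
  {c | ∃ w ∈ D.WI I, ∃ ν' : Lr r, toV ν' = D.dot w (toV ν) ∧
    c = QuotientAddGroup.mk ν'}

end ARDatum

namespace ARHelp
open ARDatum

variable {r : ℕ}

lemma toV_add (x y : Lr r) : toV (x + y) = toV x + toV y := by
  funext i; simp [toV]

lemma toV_neg (x : Lr r) : toV (-x) = -toV x := by funext i; simp [toV]

lemma toV_sub (x y : Lr r) : toV (x - y) = toV x - toV y := by funext i; simp [toV]

lemma toV_zero : toV (0 : Lr r) = 0 := by funext i; simp [toV]

lemma toV_zsmul (c : ℤ) (x : Lr r) : toV (c • x) = (c : ℝ) • toV x := by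
  funext i; simp [toV]

lemma toV_inj : Function.Injective (toV (r := r)) := by
  intro x y h
  funext i
  have := congrFun h i
  simpa [toV] using this

lemma pairR_toV (x y : Lr r) : pairR (toV x) y = (pairZ x y : ℝ) := by
  unfold pairR pairZ toV
  push_cast
  rfl

lemma pairR_add (a b : Vr r) (y : Lr r) : pairR (a + b) y = pairR a y + pairR b y := by
  simp [pairR, add_mul, Finset.sum_add_distrib]

lemma pairR_sub (a b : Vr r) (y : Lr r) : pairR (a - b) y = pairR a y - pairR b y := by
  simp [pairR, sub_mul, Finset.sum_sub_distrib]

lemma pairR_smul (c : ℝ) (a : Vr r) (y : Lr r) : pairR (c • a) y = c * pairR a y := by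
  simp [pairR, Finset.mul_sum, mul_assoc]

lemma pairR_zero (y : Lr r) : pairR (0 : Vr r) y = 0 := by simp [pairR]

lemma eq_linear (g : G r) (h0 : g 0 = 0) (v : Vr r) : g v = g.linear v := by
  have := g.map_vadd (0 : Vr r) v
  simpa [vadd_eq_add, h0] using this

lemma apply_add (g : G r) (h0 : g 0 = 0) (a b : Vr r) : g (a + b) = g a + g b := by
  rw [eq_linear g h0, map_add, ← eq_linear g h0, ← eq_linear g h0]

lemma apply_smul (g : G r) (h0 : g 0 = 0) (c : ℝ) (a : Vr r) : g (c • a) = c • g a := by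
  rw [eq_linear g h0, map_smul, ← eq_linear g h0]

lemma dot_mul (D : ARDatum r) (a b : G r) (v : Vr r) :
    D.dot (a * b) v = D.dot a (D.dot b v) := by
  show a (b (v + toV D.ρ)) - toV D.ρ = _
  simp [ARDatum.dot]

lemma dot_one (D : ARDatum r) (v : Vr r) : D.dot 1 v = v := by
  simp [ARDatum.dot]

lemma dot_inv (D : ARDatum r) (a : G r) (v : Vr r) : D.dot a⁻¹ (D.dot a v) = v := by
  rw [← dot_mul, inv_mul_cancel, dot_one]

/-- `u` fixes `0`, preserves the lattice, and shifts lattice points by `ℤI`. -/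
def GoodP (I : Finset (Lr r)) (u : G r) : Prop :=
  u 0 = 0 ∧ ∀ ξ : Lr r, ∃ ξ' : Lr r, u (toV ξ) = toV ξ' ∧ ξ' - ξ ∈ ZI I

lemma goodP_one (I : Finset (Lr r)) : GoodP I (1 : G r) :=
  ⟨rfl, fun ξ => ⟨ξ, rfl, by rw [sub_self]; exact zero_mem _⟩⟩

lemma goodP_mul {I : Finset (Lr r)} {x y : G r} (hx : GoodP I x) (hy : GoodP I y) :
    GoodP I (x * y) := by
  obtain ⟨hx0, hxl⟩ := hx
  obtain ⟨hy0, hyl⟩ := hy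
  constructor
  · show x (y 0) = 0
    rw [hy0, hx0]
  · intro ξ
    obtain ⟨ξ₁, h1, m1⟩ := hyl ξ
    obtain ⟨ξ₂, h2, m2⟩ := hxl ξ₁
    refine ⟨ξ₂, ?_, ?_⟩
    · show x (y (toV ξ)) = _
      rw [h1, h2]
    · have := add_mem m2 m1
      rwa [sub_add_sub_cancel] at this

lemma goodP_of_WI (D : ARDatum r) {I : Finset (Lr r)} (hI : I ⊆ D.simples) {u : G r}
    (hu : u ∈ D.WI I) : GoodP I u ∧ GoodP I u⁻¹ := by
  refine Subgroup.closure_induction (fun g hg => ?_)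
    ⟨goodP_one I, by rw [inv_one]; exact goodP_one I⟩
    (fun a b _ _ ha hb => ⟨goodP_mul ha.1 hb.1, by
      rw [mul_inv_rev]; exact goodP_mul hb.2 ha.2⟩)
    (fun a _ ha => ⟨ha.2, by rw [inv_inv]; exact ha.1⟩) hu
  obtain ⟨α, hαI, hg⟩ := hg
  have hαΦ : α ∈ D.Φ := D.pos_sub (D.simples_sub (hI hαI))
  have h2 : pairZ α (D.coroot α) = 2 := D.root_coroot_two α hαΦ
  have hg' : ∀ v, g v = v - pairR v (D.coroot α) • toV α := by
    intro v
    have := hg v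
    simpa using this
  have g0 : g 0 = 0 := by
    rw [hg' 0, pairR_zero]
    simp
  have glat : GoodP I g := by
    refine ⟨g0, fun ξ => ⟨ξ - pairZ ξ (D.coroot α) • α, ?_, ?_⟩⟩
    · rw [hg' (toV ξ), pairR_toV, toV_sub, toV_zsmul]
    · have h3 : ξ - pairZ ξ (D.coroot α) • α - ξ = -(pairZ ξ (D.coroot α) • α) := by abel
      rw [h3]
      exact neg_mem (AddSubgroup.zsmul_mem _
        (AddSubgroup.subset_closure (Finset.mem_coe.2 hαI)) _)
  have ginv : ∀ v, g (g v) = v := by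
    intro v
    rw [hg' (g v), hg' v, pairR_sub, pairR_smul, pairR_toV, h2]
    have h4 : pairR v (D.coroot α) - pairR v (D.coroot α) * ((2 : ℤ) : ℝ)
        = -(pairR v (D.coroot α)) := by push_cast; ring
    rw [h4, neg_smul]
    abel
  have gsymm : ∀ v, (g⁻¹ : G r) v = g v := by
    intro v
    calc (g⁻¹ : G r) v = g⁻¹ (g (g v)) := by rw [ginv v]
    _ = g v := g.symm_apply_apply (g v)
  refine ⟨glat, ⟨by rw [gsymm 0]; exact g0, fun ξ => ?_⟩⟩
  obtain ⟨ξ', h, m⟩ := glat.2 ξ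
  exact ⟨ξ', by rw [gsymm]; exact h, m⟩

/-- Translation by a lattice vector. -/
def transBy (x : Lr r) : G r := AffineEquiv.constVAdd ℝ (Vr r) (toV x)

lemma transBy_apply (x : Lr r) (v : Vr r) : transBy x v = v + toV x := by
  show toV x +ᵥ v = v + toV x
  rw [vadd_eq_add, add_comm]

lemma transBy_zero : transBy (0 : Lr r) = 1 := by
  apply AffineEquiv.ext
  intro v
  rw [transBy_apply, toV_zero, add_zero]
  rfl

lemma transBy_add (x y : Lr r) : transBy (x + y) = transBy x * transBy y := by
  apply AffineEquiv.ext
  intro v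
  show transBy (x + y) v = transBy x (transBy y v)
  rw [transBy_apply, transBy_apply, transBy_apply, toV_add]
  abel

lemma transBy_neg (x : Lr r) : transBy (-x) = (transBy x)⁻¹ := by
  apply eq_inv_of_mul_eq_one_left
  rw [← transBy_add, neg_add_cancel, transBy_zero]

lemma transBy_mem_WIp (D : ARDatum r) (I : Finset (Lr r)) {y : Lr r} (hy : y ∈ ZI I) :
    transBy ((D.p : ℤ) • y) ∈ D.WIp I := by
  refine AddSubgroup.closure_induction (fun α hα => ?_) ?_
    (fun a b _ _ ha hb => ?_) (fun a _ ha => ?_) hy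
  · apply Subgroup.subset_closure
    right
    refine ⟨α, Finset.mem_coe.1 hα, 1, fun v => ?_⟩
    rw [transBy_apply, toV_zsmul]
    norm_num
  · rw [smul_zero, transBy_zero]
    exact one_mem _
  · rw [smul_add, transBy_add]
    exact mul_mem ha hb
  · rw [smul_neg, transBy_neg]
    exact inv_mem ha

lemma WI_le_WIp (D : ARDatum r) (I : Finset (Lr r)) : D.WI I ≤ D.WIp I :=
  Subgroup.closure_mono Set.subset_union_left

lemma WIp_le_Wp (D : ARDatum r) {I : Finset (Lr r)} (hI : I ⊆ D.simples) :
    D.WIp I ≤ D.Wp := by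
  apply Subgroup.closure_mono
  apply Set.union_subset_union
  · rintro g ⟨α, hα, h⟩
    exact ⟨α, D.simples_sub (hI hα), h⟩
  · rintro g ⟨α, hα, m, h⟩
    exact ⟨α, D.simples_sub (hI hα), m, h⟩

end ARHelp

open ARHelp

/-- If `wsw⁻¹ ∉ W_{I,p}`, the orbit of `w·μ + pX` under the dot action of `W_I`
on `X/pX` has exactly `|W_I|` elements. -/
theorem stmt2 {r : ℕ} (D : ARDatum r)
    (I : Finset (Lr r)) (hI : I ⊆ D.simples)
    (s : ARDatum.G r) (hs : s ∈ D.Sp)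
    (lam mu : Lr r) (hlam : toV lam ∈ D.FundC) (hmu : toV mu ∈ D.FundCBar)
    (hmustab : ∀ g ∈ D.Wp, (D.dot g (toV mu) = toV mu ↔ g = 1 ∨ g = s))
    (hlamstab : ∀ g ∈ D.Wp, D.dot g (toV lam) = toV lam → g = 1)
    (hpXI : ∀ x : Lr r, (x ∈ D.pLat ∧ x ∈ ZI I) ↔ ∃ y ∈ ZI I, x = (D.p : ℤ) • y)
    (w : ARDatum.G r) (hw : w ∈ D.Wp)
    (hconj : w * s * w⁻¹ ∉ D.WIp I)
    (ν : Lr r) (hν : toV ν = D.dot w (toV mu)) :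
    (D.dotOrbit I ν).ncard = Nat.card (D.WI I) := by
  classical
  -- Step 1: stabiliser of ν in W_p is {1, w s w⁻¹}
  have stab : ∀ g ∈ D.Wp, D.dot g (toV ν) = toV ν → g = 1 ∨ g = w * s * w⁻¹ := by
    intro g hg hfix
    have hg' : w⁻¹ * g * w ∈ D.Wp := mul_mem (mul_mem (inv_mem hw) hg) hw
    have hfix' : D.dot (w⁻¹ * g * w) (toV mu) = toV mu := by
      rw [dot_mul D (w⁻¹ * g) w, dot_mul D w⁻¹ g, ← hν, hfix, hν]
      exact dot_inv D w _
    have hkey : w * (w⁻¹ * g * w) * w⁻¹ = g := by group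
    rcases (hmustab _ hg').1 hfix' with h | h
    · left
      rw [← hkey, h]
      group
    · right
      rw [← hkey, h]
  -- Step 2: triviality of the mod-p stabiliser in W_I
  have triv : ∀ u : ARDatum.G r, u ∈ D.WI I → ∀ δ : Lr r, δ ∈ D.pLat →
      D.dot u (toV ν) = toV (ν + δ) → u = 1 := by
    intro u hu δ hδ hdot
    obtain ⟨gu, _⟩ := goodP_of_WI D hI hu
    obtain ⟨ξ', hξ', hmem⟩ := gu.2 (ν + D.ρ)
    have hdot2 : D.dot u (toV ν) = toV (ξ' - D.ρ) := by
      unfold ARDatum.dot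
      rw [← toV_add, hξ', toV_sub]
    have hδZI : δ ∈ ZI I := by
      have h1 : ν + δ = ξ' - D.ρ := toV_inj (hdot.symm.trans hdot2)
      have h2 : δ = ξ' - (ν + D.ρ) := by
        rw [eq_sub_iff_add_eq] at h1 ⊢
        rw [← h1]
        abel
      rw [h2]
      exact hmem
    obtain ⟨y, hyZI, hyeq⟩ := (hpXI δ).1 ⟨hδ, hδZI⟩
    set t := transBy ((D.p : ℤ) • (-y)) with ht
    have htW : t ∈ D.WIp I := transBy_mem_WIp D I (neg_mem hyZI)
    have htuW : t * u ∈ D.WIp I := mul_mem htW (WI_le_WIp D I hu)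
    have htuWp : t * u ∈ D.Wp := WIp_le_Wp D hI htuW
    have hfix : D.dot (t * u) (toV ν) = toV ν := by
      rw [dot_mul, hdot, hyeq]
      show t (toV (ν + (D.p : ℤ) • y) + toV D.ρ) - toV D.ρ = toV ν
      rw [transBy_apply, smul_neg, toV_neg, toV_add]
      abel
    rcases stab _ htuWp hfix with h1 | h2
    · have h0 : (t * u) 0 = (0 : Vr r) := by rw [h1]; rfl
      have ht0 : t 0 = 0 := by
        rwa [show (t * u) 0 = t (u 0) from rfl, gu.1] at h0
      rw [ht, transBy_apply] at ht0
      have hy0 : (D.p : ℤ) • (-y) = 0 := by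
        apply toV_inj
        rw [toV_zero]
        simpa using ht0
      have hpne : (D.p : ℤ) ≠ 0 := by
        exact_mod_cast D.hp.ne_zero
      have hyz : -y = 0 := (smul_eq_zero.1 hy0).resolve_left hpne
      have htone : t = 1 := by
        rw [ht, hyz, smul_zero, transBy_zero]
      rw [htone, one_mul] at h1
      exact h1
    · exact absurd (h2 ▸ htuW) hconj
  -- Step 3: the bijection
  have exists_nu : ∀ u : D.WI I, ∃ ν' : Lr r, toV ν' = D.dot (u : ARDatum.G r) (toV ν) := by
    intro u
    obtain ⟨gu, _⟩ := goodP_of_WI D hI u.2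
    obtain ⟨ξ', hξ', _⟩ := gu.2 (ν + D.ρ)
    refine ⟨ξ' - D.ρ, ?_⟩
    unfold ARDatum.dot
    rw [← toV_add, hξ', toV_sub]
  set f : D.WI I → Lr r ⧸ D.pLat :=
    fun u => QuotientAddGroup.mk (Classical.choose (exists_nu u)) with hf
  have hfspec : ∀ u : D.WI I,
      toV (Classical.choose (exists_nu u)) = D.dot (u : ARDatum.G r) (toV ν) :=
    fun u => Classical.choose_spec (exists_nu u)
  have hinj : Function.Injective f := by
    intro a b hab
    set νa := Classical.choose (exists_nu a) with hνa0
    set νb := Classical.choose (exists_nu b) with hνb0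
    have hmemp : -νa + νb ∈ D.pLat := QuotientAddGroup.eq.1 hab
    obtain ⟨m, hm⟩ := hmemp
    have gb := (goodP_of_WI D hI b.2).2
    have hlat : νa = νb + (D.p : ℤ) • (-m) := by
      rw [smul_neg, ← hm]
      abel
    have hνaeq : toV νa = toV νb + toV ((D.p : ℤ) • (-m)) := by
      rw [← toV_add, hlat]
    obtain ⟨m', hm', _⟩ := gb.2 (-m)
    have hgdot : D.dot ((b : ARDatum.G r)⁻¹ * (a : ARDatum.G r)) (toV ν)
        = toV (ν + (D.p : ℤ) • m') := by
      rw [dot_mul, ← hfspec a, hνaeq]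
      show (b : ARDatum.G r)⁻¹ (toV νb + toV ((D.p : ℤ) • (-m)) + toV D.ρ) - toV D.ρ = _
      have e1 : toV νb + toV ((D.p : ℤ) • (-m)) + toV D.ρ
          = (toV νb + toV D.ρ) + toV ((D.p : ℤ) • (-m)) := by abel
      rw [e1, apply_add _ gb.1, toV_zsmul, apply_smul _ gb.1, hm', ← toV_zsmul]
      have h3 : D.dot ((b : ARDatum.G r))⁻¹ (toV νb) = toV ν := by
        rw [hfspec b]
        exact dot_inv D _ _
      unfold ARDatum.dot at h3
      rw [sub_eq_iff_eq_add] at h3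
      rw [h3, toV_add]
      abel
    have h1 : (b : ARDatum.G r)⁻¹ * (a : ARDatum.G r) = 1 :=
      triv _ (mul_mem (inv_mem b.2) a.2) _ ⟨m', rfl⟩ hgdot
    have h2 : (b : ARDatum.G r) = (a : ARDatum.G r) := inv_mul_eq_one.1 h1
    exact Subtype.ext h2.symm
  have hrange : Set.range f = D.dotOrbit I ν := by
    ext c
    constructor
    · rintro ⟨u, rfl⟩
      exact ⟨u, u.2, Classical.choose (exists_nu u), hfspec u, rfl⟩
    · rintro ⟨g, hg, ν', hν', rfl⟩
      refine ⟨⟨g, hg⟩, ?_⟩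
      have hc : Classical.choose (exists_nu ⟨g, hg⟩) = ν' := by
        apply toV_inj
        rw [hfspec ⟨g, hg⟩, hν']
      show QuotientAddGroup.mk (Classical.choose (exists_nu ⟨g, hg⟩))
          = QuotientAddGroup.mk ν'
      rw [hc]
  rw [← hrange, ← Nat.card_coe_set_eq, Nat.card_range_of_injective hinj]

end
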